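/- Let Δ be a 2-dimensional Buchsbaum simplicial complex and F = {a,b,c} a 3-element set, and set Γ = Δ ∪ ⟨F⟩. If Δ ∩ ⟨F⟩ = ⟨{a,b},{a,c}⟩, then Γ is Buchsbaum and h(Γ) = h(Δ) + (0,0,1,0). -/

import Mathlib

open Finset

noncomputable section

/-- `Δ` is a simplicial complex on `[n] = {1,…,n}`: a collection of subsets of `[n]`,
closed under taking subsets, containing every singleton `{i}` for `i ∈ [n]`. -/
def IsComplexOn (n : ℕ) (Δ : Finset (Finset ℕ)) : Prop :=
  (∀ F ∈ Δ, ∀ G ⊆ F, G ∈ Δ) ∧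
  (∀ F ∈ Δ, ∀ i ∈ F, i ∈ Finset.Icc 1 n) ∧
  (∀ i ∈ Finset.Icc 1 n, ({i} : Finset ℕ) ∈ Δ)

/-- a simplicial complex whose vertex set is contained in `[n]`:
a downward closed collection of subsets of `[n]`. -/
def IsComplexIn (n : ℕ) (Δ : Finset (Finset ℕ)) : Prop :=
  (∀ F ∈ Δ, ∀ G ⊆ F, G ∈ Δ) ∧ (∀ F ∈ Δ, ∀ i ∈ F, i ∈ Finset.Icc 1 n)

/-- the faces of `Δ` with `m` vertices -/
def facesOf (Δ : Finset (Finset ℕ)) (m : ℕ) : Finset (Finset ℕ) :=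
  Δ.filter fun F => F.card = m

/-- `fVec Δ j = f_{j-1}(Δ)`, the number of faces of `Δ` with `j` vertices;
by convention `f_{-1}(Δ) = 1`. -/
def fVec (Δ : Finset (Finset ℕ)) (j : ℕ) : ℤ :=
  if j = 0 then 1 else ((facesOf Δ j).card : ℤ)

/-- the `h`-vector of a `(d-1)`-dimensional complex, defined by
`∑ f_{i-1} (x-1)^{d-i} = ∑ h_i x^{d-i}`, i.e.
`h_i = ∑_{j=0}^{i} (-1)^{i-j} C(d-j, i-j) f_{j-1}`. -/
def hVec (d : ℕ) (Δ : Finset (Finset ℕ)) (i : ℕ) : ℤ :=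
  ∑ j ∈ Finset.range (i + 1),
    (-1 : ℤ) ^ (i - j) * ((d - j).choose (i - j) : ℤ) * fVec Δ j

/-- the dimension `max {k : f_k(Δ) ≠ 0}` of `Δ`, as an integer -/
def dimZ (Δ : Finset (Finset ℕ)) : ℤ := ((Δ.sup Finset.card : ℕ) : ℤ) - 1

/-- the link `lk_Δ(F) = {G : G ∩ F = ∅, G ∪ F ∈ Δ}` -/
def link (Δ : Finset (Finset ℕ)) (F : Finset ℕ) : Finset (Finset ℕ) :=
  Δ.filter fun G => Disjoint G F ∧ G ∪ F ∈ Δ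

variable (K : Type) [Field K]

/-- the simplicial boundary operator on formal `K`-linear combinations of
finite subsets of `ℕ` (vertices ordered by the order on `ℕ`):
`∂ F = ∑_{v ∈ F} (-1)^{#{u ∈ F : u < v}} (F \ {v})`. -/
def bdry : (Finset ℕ →₀ K) →ₗ[K] (Finset ℕ →₀ K) :=
  Finsupp.lsum K fun F => LinearMap.toSpanSingleton K (Finset ℕ →₀ K)
    (∑ v ∈ F, ((-1 : K) ^ ((F.filter fun u => u < v).card)) • Finsupp.single (F.erase v) (1 : K))

/-- the space of simplicial `K`-chains of `Δ` spanned by the faces with `m` vertices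
(for `m = 0` this is the span of the empty face, giving *reduced* homology) -/
def chains (Δ : Finset (Finset ℕ)) (m : ℕ) : Submodule K (Finset ℕ →₀ K) :=
  Submodule.span K ((fun F => Finsupp.single F (1 : K)) '' (facesOf Δ m : Set (Finset ℕ)))

/-- the dimension of the reduced homology of `Δ` at faces of cardinality `m`:
`dim (ker ∂ ∩ C_m) - dim (∂ C_{m+1})` -/
def homDim (Δ : Finset (Finset ℕ)) (m : ℕ) : ℕ :=
  Module.finrank K ↥(chains K Δ m ⊓ LinearMap.ker (bdry K))
    - Module.finrank K ↥((chains K Δ (m + 1)).map (bdry K))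

/-- the reduced Betti number `β_i(Δ; K) = dim_K H̃_i(Δ; K)` for `i : ℤ` -/
def betti (Δ : Finset (Finset ℕ)) (i : ℤ) : ℕ :=
  if 0 ≤ i + 1 then homDim K Δ (i + 1).toNat else 0

/-- all facets (maximal faces) of `Δ` have the same cardinality -/
def IsPure (Δ : Finset (Finset ℕ)) : Prop :=
  ∀ F ∈ Δ, (∀ G ∈ Δ, F ⊆ G → F = G) → F.card = Δ.sup Finset.card

/-- `Δ` is Cohen–Macaulay (over `K`): for every face `F ∈ Δ` (including `∅`),
`β_i(lk_Δ(F)) = 0` for all `i ≠ dim Δ - |F|`. -/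
def IsCohenMacaulay (Δ : Finset (Finset ℕ)) : Prop :=
  ∀ F ∈ Δ, ∀ i : ℤ, i ≠ dimZ Δ - F.card → betti K (link Δ F) i = 0

/-- `Δ` is Buchsbaum (over `K`): `Δ` is pure and the link of every vertex is
Cohen–Macaulay. -/
def IsBuchsbaum (Δ : Finset (Finset ℕ)) : Prop :=
  IsPure Δ ∧ ∀ v : ℕ, ({v} : Finset ℕ) ∈ Δ → IsCohenMacaulay K (link Δ {v})

/-- `Δ` is connected: any two vertices are joined by a path of edges of `Δ` -/
def IsConnectedComplex (Δ : Finset (Finset ℕ)) : Prop :=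
  ∀ u v : ℕ, ({u} : Finset ℕ) ∈ Δ → ({v} : Finset ℕ) ∈ Δ →
    Relation.ReflTransGen (fun a b : ℕ => a ≠ b ∧ ({a, b} : Finset ℕ) ∈ Δ) u v

/-- `Δ` is link-acyclic: `β_i(lk_Δ(v)) = 0` for every vertex `v` of `Δ` and every `i` -/
def IsLinkAcyclic (Δ : Finset (Finset ℕ)) : Prop :=
  ∀ v : ℕ, ({v} : Finset ℕ) ∈ Δ → ∀ i : ℤ, betti K (link Δ {v}) i = 0

/-- `Δ` is `2`-dimensional with `h`-vector `(a, b, c, e)` -/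
def hVector3 (Δ : Finset (Finset ℕ)) (a b c e : ℤ) : Prop :=
  hVec 3 Δ 0 = a ∧ hVec 3 Δ 1 = b ∧ hVec 3 Δ 2 = c ∧ hVec 3 Δ 3 = e

/-- `macaulay2 a = a^⟨2⟩`: if `a = C(b,2) + r` is the (greedy) `2`-nd Macaulay
representation (`b` maximal with `C(b,2) ≤ a`, `0 ≤ r < b`, `r = C(r,1)`), then
`a^⟨2⟩ = C(b+1,3) + C(r+1,2)`, and `0^⟨2⟩ = 0`. -/
def macaulay2 (a : ℕ) : ℕ :=
  if a = 0 then 0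
  else
    (Nat.findGreatest (fun t => t.choose 2 ≤ a) (a + 2) + 1).choose 3
      + (a - (Nat.findGreatest (fun t => t.choose 2 ≤ a) (a + 2)).choose 2 + 1).choose 2

/-- `modRep n i = ī`, the unique element of `[n] = {1,…,n}` congruent to `i` mod `n` -/
def modRep (n : ℕ) (i : ℤ) : ℕ := ((i - 1) % (n : ℤ)).toNat + 1


end


section Aux

open Finsupp Submodule Module

variable (K : Type) [Field K]

lemma chains_eq (Λ : Finset (Finset ℕ)) (m : ℕ) :
    chains K Λ m = Finsupp.supported K K ↑(facesOf Λ m) := by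
  rw [chains, Finsupp.supported_eq_span_single]

lemma single_mem_chains {Λ : Finset (Finset ℕ)} {m : ℕ} {G : Finset ℕ}
    (h : G ∈ facesOf Λ m) : Finsupp.single G (1:K) ∈ chains K Λ m :=
  Submodule.subset_span ⟨G, h, rfl⟩

instance chains_fd (Λ : Finset (Finset ℕ)) (m : ℕ) : FiniteDimensional K (chains K Λ m) := by
  rw [chains]
  exact FiniteDimensional.span_of_finite K (((facesOf Λ m).finite_toSet).image _)

lemma bdry_single (F : Finset ℕ) :
    bdry K (Finsupp.single F (1:K)) =
      ∑ v ∈ F, ((-1 : K) ^ ((F.filter fun u => u < v).card)) • Finsupp.single (F.erase v) (1 : K) := by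
  rw [bdry, Finsupp.lsum_single, LinearMap.toSpanSingleton_apply, one_smul]

lemma bdry_empty : bdry K (Finsupp.single (∅ : Finset ℕ) (1:K)) = 0 := by
  rw [bdry_single]; simp

lemma bdry_vertex (v : ℕ) :
    bdry K (Finsupp.single ({v} : Finset ℕ) (1:K)) = Finsupp.single ∅ 1 := by
  rw [bdry_single]
  have : ({v} : Finset ℕ).filter (fun u => u < v) = ∅ := by
    ext x
    simp only [Finset.mem_filter, Finset.mem_singleton, Finset.notMem_empty, iff_false, not_and]
    rintro rfl; omega
  simp [this]

lemma bdry_pair {u w : ℕ} (h : u < w) :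
    bdry K (Finsupp.single ({u, w} : Finset ℕ) (1:K)) =
      Finsupp.single {w} 1 - Finsupp.single {u} 1 := by
  have hne : u ≠ w := h.ne
  rw [bdry_single, Finset.sum_pair hne]
  have h1 : ({u, w} : Finset ℕ).filter (fun x => x < u) = ∅ := by
    ext x
    simp only [Finset.mem_filter, Finset.mem_insert, Finset.mem_singleton, Finset.notMem_empty,
      iff_false, not_and]
    rintro (rfl | rfl) <;> omega
  have h2 : ({u, w} : Finset ℕ).filter (fun x => x < w) = {u} := by
    ext x
    simp only [Finset.mem_filter, Finset.mem_insert, Finset.mem_singleton]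
    constructor
    · rintro ⟨rfl | rfl, hx⟩ <;> omega
    · rintro rfl; exact ⟨Or.inl rfl, h⟩
  have e1 : ({u, w} : Finset ℕ).erase u = {w} := by
    ext x
    simp only [Finset.mem_erase, Finset.mem_insert, Finset.mem_singleton]
    constructor
    · rintro ⟨hx, rfl | rfl⟩ <;> omega
    · rintro rfl; exact ⟨hne.symm, Or.inr rfl⟩
  have e2 : ({u, w} : Finset ℕ).erase w = {u} := by
    ext x
    simp only [Finset.mem_erase, Finset.mem_insert, Finset.mem_singleton]
    constructor
    · rintro ⟨hx, rfl | rfl⟩ <;> omega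
    · rintro rfl; exact ⟨hne, Or.inl rfl⟩
  rw [h1, h2, e1, e2]
  simp [sub_eq_add_neg]

lemma bdry_diff (u w : ℕ) :
    bdry K (Finsupp.single ({w}:Finset ℕ) (1:K) - Finsupp.single {u} 1) = 0 := by
  rw [map_sub, bdry_vertex, bdry_vertex, sub_self]

lemma edge_sub_mem {Λ : Finset (Finset ℕ)} {u w : ℕ} (hne : u ≠ w)
    (hE : ({u, w} : Finset ℕ) ∈ facesOf Λ 2) :
    Finsupp.single ({w} : Finset ℕ) (1:K) - Finsupp.single {u} 1 ∈ (chains K Λ 2).map (bdry K) := by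
  rcases hne.lt_or_gt with h | h
  · exact ⟨Finsupp.single {u,w} 1, single_mem_chains K hE, bdry_pair K h⟩
  · refine ⟨-Finsupp.single {w,u} 1, Submodule.neg_mem _ (single_mem_chains K ?_), ?_⟩
    · rwa [Finset.pair_comm]
    · rw [map_neg, bdry_pair K h, neg_sub]

lemma map_chains2_le {Λ : Finset (Finset ℕ)} (hdc : ∀ F ∈ Λ, ∀ G ⊆ F, G ∈ Λ) :
    (chains K Λ 2).map (bdry K) ≤ chains K Λ 1 ⊓ LinearMap.ker (bdry K) := by
  rw [chains, Submodule.map_span]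
  refine Submodule.span_le.2 ?_
  rintro x ⟨_, ⟨F, hF, rfl⟩, rfl⟩
  rw [Finset.mem_coe] at hF
  obtain ⟨hFΛ, hF2⟩ := Finset.mem_filter.1 hF
  obtain ⟨u, w, huw, rfl⟩ := Finset.card_eq_two.1 hF2
  have hu : ({u} : Finset ℕ) ∈ facesOf Λ 1 := by
    refine Finset.mem_filter.2 ⟨hdc _ hFΛ _ ?_, Finset.card_singleton u⟩
    intro t ht
    simp only [Finset.mem_singleton] at ht
    simp [ht]
  have hw : ({w} : Finset ℕ) ∈ facesOf Λ 1 := by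
    refine Finset.mem_filter.2 ⟨hdc _ hFΛ _ ?_, Finset.card_singleton w⟩
    intro t ht
    simp only [Finset.mem_singleton] at ht
    simp [ht]
  show bdry K (Finsupp.single {u, w} 1) ∈ (chains K Λ 1 ⊓ LinearMap.ker (bdry K) : Submodule K _)
  rcases huw.lt_or_gt with h | h
  · rw [bdry_pair K h]
    exact Submodule.mem_inf.2 ⟨sub_mem (single_mem_chains K hw) (single_mem_chains K hu),
      LinearMap.mem_ker.2 (bdry_diff K u w)⟩
  · rw [Finset.pair_comm, bdry_pair K h]
    exact Submodule.mem_inf.2 ⟨sub_mem (single_mem_chains K hu) (single_mem_chains K hw),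
      LinearMap.mem_ker.2 (bdry_diff K w u)⟩

lemma homDim_empty {Λ : Finset (Finset ℕ)} {m : ℕ} (h : facesOf Λ m = ∅) :
    homDim K Λ m = 0 := by
  have hc : chains K Λ m = ⊥ := by
    rw [chains, h]; simp
  rw [homDim, hc, bot_inf_eq, finrank_bot, Nat.zero_sub]

lemma faces_zero {Λ : Finset (Finset ℕ)} (h : ∅ ∈ Λ) : facesOf Λ 0 = {∅} := by
  ext G
  simp only [facesOf, Finset.mem_filter, Finset.card_eq_zero, Finset.mem_singleton]
  exact ⟨fun h' => h'.2, fun h' => ⟨h' ▸ h, h'⟩⟩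

lemma chains_zero {Λ : Finset (Finset ℕ)} (h : ∅ ∈ Λ) :
    chains K Λ 0 = Submodule.span K {Finsupp.single ∅ 1} := by
  rw [chains, faces_zero h]
  congr 1
  simp

lemma homDim_zero_vanish {Λ : Finset (Finset ℕ)} {v : ℕ} (h0 : ∅ ∈ Λ)
    (hv : ({v}:Finset ℕ) ∈ Λ) : homDim K Λ 0 = 0 := by
  apply Nat.sub_eq_zero_of_le
  have hne : Finsupp.single (∅:Finset ℕ) (1:K) ≠ 0 := by simp [Finsupp.single_eq_zero]
  have h1 : Module.finrank K ↥(chains K Λ 0 ⊓ LinearMap.ker (bdry K)) ≤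
      Module.finrank K ↥(chains K Λ 0) := Submodule.finrank_mono inf_le_left
  have h1' : Module.finrank K ↥(chains K Λ 0) = 1 := by
    rw [chains_zero K h0]
    exact finrank_span_singleton hne
  have h2 : 1 ≤ Module.finrank K ↥((chains K Λ (0+1)).map (bdry K)) := by
    have hx : Finsupp.single (∅:Finset ℕ) (1:K) ∈ (chains K Λ (0+1)).map (bdry K) :=
      ⟨Finsupp.single {v} 1, single_mem_chains K (Finset.mem_filter.2 ⟨hv, rfl⟩), bdry_vertex K v⟩
    have hsp : Submodule.span K {Finsupp.single (∅:Finset ℕ) (1:K)} ≤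
        (chains K Λ (0+1)).map (bdry K) :=
      (Submodule.span_singleton_le_iff_mem _ _).2 hx
    calc 1 = Module.finrank K ↥(Submodule.span K {Finsupp.single (∅:Finset ℕ) (1:K)}) :=
        (finrank_span_singleton hne).symm
      _ ≤ _ := Submodule.finrank_mono hsp
  omega

lemma vertex_exists {Λ : Finset (Finset ℕ)} (h0 : ∅ ∈ Λ) (h : homDim K Λ 0 = 0) :
    (facesOf Λ 1).Nonempty := by
  rw [Finset.nonempty_iff_ne_empty]
  intro h1
  have hc : (chains K Λ (0+1)).map (bdry K) = ⊥ := by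
    have : chains K Λ (0+1) = ⊥ := by
      rw [chains, h1]
      simp
    rw [this, Submodule.map_bot]
  rw [homDim, hc, finrank_bot, Nat.sub_zero] at h
  have hne : Finsupp.single (∅:Finset ℕ) (1:K) ≠ 0 := by simp [Finsupp.single_eq_zero]
  have hx : Finsupp.single (∅:Finset ℕ) (1:K) ∈ chains K Λ 0 ⊓ LinearMap.ker (bdry K) :=
    Submodule.mem_inf.2 ⟨single_mem_chains K (Finset.mem_filter.2 ⟨h0, rfl⟩),
      LinearMap.mem_ker.2 (bdry_empty K)⟩
  haveI : FiniteDimensional K ↥(chains K Λ 0 ⊓ LinearMap.ker (bdry K)) :=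
    Submodule.finiteDimensional_of_le inf_le_left
  have : 1 ≤ Module.finrank K ↥(chains K Λ 0 ⊓ LinearMap.ker (bdry K)) := by
    calc 1 = Module.finrank K ↥(Submodule.span K {Finsupp.single (∅:Finset ℕ) (1:K)}) :=
        (finrank_span_singleton hne).symm
      _ ≤ _ := Submodule.finrank_mono ((Submodule.span_singleton_le_iff_mem _ _).2 hx)
  omega

lemma homDim_one_zero {Λ : Finset (Finset ℕ)}
    (h : chains K Λ 1 ⊓ LinearMap.ker (bdry K) ≤ (chains K Λ 2).map (bdry K)) :
    homDim K Λ 1 = 0 :=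
  Nat.sub_eq_zero_of_le (Submodule.finrank_mono h)

lemma Z_le_B {Λ : Finset (Finset ℕ)} (hdc : ∀ F ∈ Λ, ∀ G ⊆ F, G ∈ Λ)
    (h : homDim K Λ 1 = 0) :
    chains K Λ 1 ⊓ LinearMap.ker (bdry K) ≤ (chains K Λ 2).map (bdry K) := by
  have hle := map_chains2_le K hdc
  haveI : FiniteDimensional K ↥(chains K Λ 1 ⊓ LinearMap.ker (bdry K)) :=
    Submodule.finiteDimensional_of_le inf_le_left
  rw [homDim, Nat.sub_eq_zero_iff_le] at h
  have := Submodule.eq_of_le_of_finrank_le hle h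
  rw [this]

lemma Z1_ext (Λ Λ' : Finset (Finset ℕ)) (p q : ℕ) (hpq : p ≠ q)
    (hZ : chains K Λ 1 ⊓ LinearMap.ker (bdry K) ≤ (chains K Λ 2).map (bdry K))
    (h1 : facesOf Λ' 1 ⊆ insert {q} (facesOf Λ 1))
    (hp1 : ({p}:Finset ℕ) ∈ facesOf Λ 1)
    (h2 : facesOf Λ 2 ⊆ facesOf Λ' 2)
    (hpe : ({p, q}:Finset ℕ) ∈ facesOf Λ' 2) :
    chains K Λ' 1 ⊓ LinearMap.ker (bdry K) ≤ (chains K Λ' 2).map (bdry K) := by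
  intro x hx
  obtain ⟨hx1, hxk⟩ := Submodule.mem_inf.1 hx
  set d : Finset ℕ →₀ K := Finsupp.single {q} 1 - Finsupp.single {p} 1 with hd
  have hdmem : d ∈ (chains K Λ' 2).map (bdry K) := edge_sub_mem K hpq hpe
  have hqp : ({p}:Finset ℕ) ≠ ({q}:Finset ℕ) := by
    simp [Finset.singleton_injective.ne_iff, hpq]
  set t : K := x {q} with ht
  have hyc : x - t • d ∈ chains K Λ 1 := by
    rw [chains_eq, Finsupp.mem_supported]
    intro G hG
    rw [Finset.mem_coe]
    by_cases hGq : G = ({q} : Finset ℕ)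
    · exfalso
      subst hGq
      have hval : (x - t • d) {q} = 0 := by
        rw [Finsupp.sub_apply, Finsupp.smul_apply, hd, Finsupp.sub_apply,
          Finsupp.single_eq_same, Finsupp.single_eq_of_ne' hqp]
        simp [ht]
      rw [Finset.mem_coe, Finsupp.mem_support_iff] at hG
      exact hG hval
    · have hsup : G ∈ x.support ∪ (t • d).support :=
        Finset.mem_of_subset Finsupp.support_sub hG
      rcases Finset.mem_union.1 hsup with h | h
      · have hG' : G ∈ facesOf Λ' 1 := by
          rw [chains_eq, Finsupp.mem_supported] at hx1
          exact hx1 h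
        rcases Finset.mem_insert.1 (h1 hG') with h' | h'
        · exact absurd h' hGq
        · exact h'
      · have hds : (t • d).support ⊆ {({q}:Finset ℕ), {p}} := by
          refine Finsupp.support_smul.trans ?_
          rw [hd]
          refine Finsupp.support_sub.trans ?_
          intro y hy
          rcases Finset.mem_union.1 hy with hy | hy
          · exact Finset.mem_insert.2 (Or.inl (Finset.mem_singleton.1
              (Finsupp.support_single_subset hy)))
          · exact Finset.mem_insert.2 (Or.inr (Finsupp.support_single_subset hy))
        rcases Finset.mem_insert.1 (hds h) with h' | h'
        · exact absurd h' hGq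
        · rw [Finset.mem_singleton.1 h']
          exact hp1
  have hyk : x - t • d ∈ LinearMap.ker (bdry K) := by
    rw [LinearMap.mem_ker, map_sub, map_smul, LinearMap.mem_ker.1 hxk, hd, bdry_diff]
    simp
  have hy : x - t • d ∈ (chains K Λ 2).map (bdry K) :=
    hZ (Submodule.mem_inf.2 ⟨hyc, hyk⟩)
  have hmono : (chains K Λ 2).map (bdry K) ≤ (chains K Λ' 2).map (bdry K) := by
    apply Submodule.map_mono
    rw [chains_eq, chains_eq]
    exact Finsupp.supported_mono (Finset.coe_subset.2 h2)
  have hxx : x = (x - t • d) + t • d := by abel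
  rw [hxx]
  exact Submodule.add_mem _ (hmono hy) (Submodule.smul_mem _ t hdmem)

lemma link_empty (Λ : Finset (Finset ℕ)) : link Λ ∅ = Λ := by
  unfold link
  rw [Finset.filter_eq_self]
  intro G hG
  simp [hG]

lemma betti_eq_homDim {Λ : Finset (Finset ℕ)} {i : ℤ} (h : 0 ≤ i + 1) :
    betti K Λ i = homDim K Λ (i+1).toNat := if_pos h

lemma betti_neg {Λ : Finset (Finset ℕ)} {i : ℤ} (h : i + 1 < 0) : betti K Λ i = 0 :=
  if_neg (not_le.2 h)

lemma link_card_le {Λ : Finset (Finset ℕ)} (hcard : ∀ F ∈ Λ, F.card ≤ 2) {F G : Finset ℕ}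
    (hG : G ∈ link Λ F) : G.card + F.card ≤ 2 := by
  obtain ⟨hGΛ, hdisj, hU⟩ := Finset.mem_filter.1 hG
  have := hcard _ hU
  rwa [Finset.card_union_of_disjoint hdisj] at this

lemma graph_CM (Λ : Finset (Finset ℕ))
    (hdc : ∀ F ∈ Λ, ∀ G ⊆ F, G ∈ Λ)
    (hcard : ∀ F ∈ Λ, F.card ≤ 2)
    (hdim : ∃ F ∈ Λ, F.card = 2)
    (hedge : ∀ u : ℕ, ({u}:Finset ℕ) ∈ Λ → ∃ w, w ≠ u ∧ ({u, w}:Finset ℕ) ∈ Λ)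
    (hZB : chains K Λ 1 ⊓ LinearMap.ker (bdry K) ≤ (chains K Λ 2).map (bdry K)) :
    IsCohenMacaulay K Λ := by
  obtain ⟨E, hEΛ, hE2⟩ := hdim
  have h0 : ∅ ∈ Λ := hdc E hEΛ ∅ (Finset.empty_subset E)
  have hsup : Λ.sup Finset.card = 2 :=
    le_antisymm (Finset.sup_le hcard) (hE2 ▸ Finset.le_sup hEΛ)
  have hdimZ : dimZ Λ = 1 := by rw [dimZ, hsup]; rfl
  intro F hF i hi
  rw [hdimZ] at hi
  by_cases hip : 0 ≤ i + 1
  swap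
  · exact betti_neg K (by omega)
  rw [betti_eq_homDim K hip]
  have him : i + 1 = ((i+1).toNat : ℤ) := (Int.toNat_of_nonneg hip).symm
  set m := (i+1).toNat with hm
  have hFc : F.card = 0 ∨ F.card = 1 ∨ F.card = 2 := by
    have := hcard F hF
    omega
  rcases hFc with hFc | hFc | hFc
  · -- F = ∅
    rw [Finset.card_eq_zero.1 hFc, link_empty]
    rw [Finset.card_eq_zero.1 hFc] at hi
    obtain h | h | h | h : m = 0 ∨ m = 1 ∨ m = 2 ∨ 3 ≤ m := by omega
    · obtain ⟨u, w, huw, rfl⟩ := Finset.card_eq_two.1 hE2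
      have hu : ({u}:Finset ℕ) ∈ Λ := hdc _ hEΛ _ (by
        intro t ht; simp only [Finset.mem_singleton] at ht; simp [ht])
      rw [h]
      exact homDim_zero_vanish K h0 hu
    · rw [h]
      exact homDim_one_zero K hZB
    · exfalso; apply hi; rw [Finset.card_empty]; omega
    · apply homDim_empty
      rw [Finset.eq_empty_iff_forall_notMem]
      intro G hG
      obtain ⟨hGΛ, hGc⟩ := Finset.mem_filter.1 hG
      have := hcard G hGΛ
      omega
  · -- F = {u}
    obtain ⟨u, rfl⟩ := Finset.card_eq_one.1 hFc
    rw [Finset.card_singleton] at hi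
    obtain h | h | h : m = 0 ∨ m = 1 ∨ 2 ≤ m := by omega
    · rw [h]
      obtain ⟨w, hwu, hE⟩ := hedge u hF
      have h0' : ∅ ∈ link Λ {u} := Finset.mem_filter.2 ⟨h0, Finset.disjoint_empty_left _,
        by rwa [Finset.empty_union]⟩
      have hw' : ({w}:Finset ℕ) ∈ link Λ {u} := by
        refine Finset.mem_filter.2 ⟨hdc _ hE _ (by
          intro t ht; simp only [Finset.mem_singleton] at ht; simp [ht]), ?_, ?_⟩
        · rw [Finset.disjoint_singleton_right]
          simp [hwu.symm, Ne.symm hwu]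
        · have : ({w}:Finset ℕ) ∪ {u} = {u, w} := by
            ext t
            simp only [Finset.mem_union, Finset.mem_singleton, Finset.mem_insert]
            tauto
          rwa [this]
      exact homDim_zero_vanish K h0' hw'
    · exfalso; apply hi; omega
    · apply homDim_empty
      rw [Finset.eq_empty_iff_forall_notMem]
      intro G hG
      obtain ⟨hGl, hGc⟩ := Finset.mem_filter.1 hG
      have := link_card_le hcard hGl
      rw [Finset.card_singleton] at this
      omega
  · -- F an edge
    rw [hFc] at hi
    have h : 1 ≤ m := by omega
    apply homDim_empty
    rw [Finset.eq_empty_iff_forall_notMem]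
    intro G hG
    obtain ⟨hGl, hGc⟩ := Finset.mem_filter.1 hG
    have := link_card_le hcard hGl
    omega

end Aux

set_option maxHeartbeats 4000000 in
/-- **Lemma 2.5.** Let `Δ` be a `2`-dimensional Buchsbaum complex, `F = {a,b,c}`,
and `Γ = Δ ∪ ⟨F⟩`. If `Δ ∩ ⟨F⟩ = ({a, b} : Finset ℕ).powerset ∪ ({a, c} : Finset ℕ).powerset` then `Γ` is Buchsbaum
and the `h`-vector changes as stated. -/
theorem stmt9 (K : Type) [Field K] (nn : ℕ) (Δ Γ : Finset (Finset ℕ)) (a b c : ℕ)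
    (hΔ : IsComplexOn nn Δ) (hdim : dimZ Δ = 2) (hB : IsBuchsbaum K Δ)
    (hab : a ≠ b) (hac : a ≠ c) (hbc : b ≠ c)
    (hΓ : Γ = Δ ∪ ({a, b, c} : Finset ℕ).powerset)
    (hcap : Δ ∩ ({a, b, c} : Finset ℕ).powerset = ({a, b} : Finset ℕ).powerset ∪ ({a, c} : Finset ℕ).powerset) :
    IsBuchsbaum K Γ ∧ hVec 3 Γ 0 = hVec 3 Δ 0 ∧
      hVec 3 Γ 1 = hVec 3 Δ 1 ∧
      hVec 3 Γ 2 = hVec 3 Δ 2 + 1 ∧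
      hVec 3 Γ 3 = hVec 3 Δ 3 := by
  obtain ⟨hdc, hbound, hvertS⟩ := hΔ
  obtain ⟨hpure, hCM⟩ := hB
  have hsupΔ : Δ.sup Finset.card = 3 := by
    rw [dimZ] at hdim
    omega
  have habΔ : ({a,b}:Finset ℕ) ∈ Δ := by
    have h1 : ({a,b}:Finset ℕ) ∈ ({a,b}:Finset ℕ).powerset ∪ ({a,c}:Finset ℕ).powerset :=
      Finset.mem_union_left _ (Finset.mem_powerset.2 (Finset.Subset.refl _))
    rw [← hcap] at h1
    exact (Finset.mem_inter.1 h1).1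
  have hacΔ : ({a,c}:Finset ℕ) ∈ Δ := by
    have h1 : ({a,c}:Finset ℕ) ∈ ({a,b}:Finset ℕ).powerset ∪ ({a,c}:Finset ℕ).powerset :=
      Finset.mem_union_right _ (Finset.mem_powerset.2 (Finset.Subset.refl _))
    rw [← hcap] at h1
    exact (Finset.mem_inter.1 h1).1
  have haΔ : ({a}:Finset ℕ) ∈ Δ := by
    apply hdc _ habΔ
    intro t ht
    simp only [Finset.mem_singleton] at ht
    simp [ht]
  have hbΔ : ({b}:Finset ℕ) ∈ Δ := by
    apply hdc _ habΔ
    intro t ht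
    simp only [Finset.mem_singleton] at ht
    simp [ht]
  have hcΔ : ({c}:Finset ℕ) ∈ Δ := by
    apply hdc _ hacΔ
    intro t ht
    simp only [Finset.mem_singleton] at ht
    simp [ht]
  have hbcΔ : ({b,c}:Finset ℕ) ∉ Δ := by
    intro h
    have hsub : ({b,c}:Finset ℕ) ∈ ({a,b,c}:Finset ℕ).powerset :=
      Finset.mem_powerset.2 (by
        intro t ht
        simp only [Finset.mem_insert, Finset.mem_singleton] at ht ⊢
        tauto)
    have h2 := Finset.mem_inter.2 ⟨h, hsub⟩
    rw [hcap] at h2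
    rcases Finset.mem_union.1 h2 with h3 | h3
    · have := Finset.mem_powerset.1 h3 (show c ∈ ({b,c}:Finset ℕ) by simp)
      simp only [Finset.mem_insert, Finset.mem_singleton] at this
      rcases this with h4 | h4
      · exact hac h4.symm
      · exact hbc h4.symm
    · have := Finset.mem_powerset.1 h3 (show b ∈ ({b,c}:Finset ℕ) by simp)
      simp only [Finset.mem_insert, Finset.mem_singleton] at this
      rcases this with h4 | h4
      · exact hab h4.symm
      · exact hbc h4
  have habcΔ : ({a,b,c}:Finset ℕ) ∉ Δ := by
    intro h
    apply hbcΔ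
    apply hdc _ h
    intro t ht
    simp only [Finset.mem_insert, Finset.mem_singleton] at ht ⊢
    tauto
  have hmemΓ : ∀ x : Finset ℕ, x ∈ Γ ↔ x ∈ Δ ∨ x = {b,c} ∨ x = {a,b,c} := by
    intro x
    rw [hΓ, Finset.mem_union, Finset.mem_powerset]
    constructor
    · rintro (h | h)
      · exact Or.inl h
      · by_cases hcx : c ∈ x
        · by_cases hbx : b ∈ x
          · by_cases hax : a ∈ x
            · right; right
              apply Finset.Subset.antisymm h
              intro t ht
              simp only [Finset.mem_insert, Finset.mem_singleton] at ht
              rcases ht with rfl | rfl | rfl <;> assumption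
            · right; left
              apply Finset.Subset.antisymm
              · intro t ht
                have h5 := h ht
                simp only [Finset.mem_insert, Finset.mem_singleton] at h5 ⊢
                rcases h5 with rfl | h' | h'
                · exact absurd ht hax
                · exact Or.inl h'
                · exact Or.inr h'
              · intro t ht
                simp only [Finset.mem_insert, Finset.mem_singleton] at ht
                rcases ht with rfl | rfl <;> assumption
          · left
            apply hdc _ hacΔ
            intro t ht
            have h5 := h ht
            simp only [Finset.mem_insert, Finset.mem_singleton] at h5 ⊢
            rcases h5 with rfl | h' | h'
            · exact Or.inl rfl
            · subst h'; exact absurd ht hbx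
            · exact Or.inr h'
        · left
          apply hdc _ habΔ
          intro t ht
          have h5 := h ht
          simp only [Finset.mem_insert, Finset.mem_singleton] at h5 ⊢
          rcases h5 with rfl | h' | h'
          · exact Or.inl rfl
          · exact Or.inr h'
          · subst h'; exact absurd ht hcx
    · rintro (h | rfl | rfl)
      · exact Or.inl h
      · right
        intro t ht
        simp only [Finset.mem_insert, Finset.mem_singleton] at ht ⊢
        tauto
      · exact Or.inr (Finset.Subset.refl _)
  have hbccard : ({b,c}:Finset ℕ).card = 2 := by
    rw [Finset.card_insert_of_notMem (by simp [hbc]), Finset.card_singleton]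
  have haccard : ({a,c}:Finset ℕ).card = 2 := by
    rw [Finset.card_insert_of_notMem (by simp [hac]), Finset.card_singleton]
  have habcard : ({a,b}:Finset ℕ).card = 2 := by
    rw [Finset.card_insert_of_notMem (by simp [hab]), Finset.card_singleton]
  have habccard : ({a,b,c}:Finset ℕ).card = 3 := by
    rw [Finset.card_insert_of_notMem (by simp [hab, hac]), hbccard]
  have hΓ3 : ∀ F ∈ Γ, F.card ≤ 3 := by
    intro F hF
    rcases (hmemΓ F).1 hF with h | rfl | rfl
    · exact hsupΔ ▸ Finset.le_sup (f := Finset.card) h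
    · rw [hbccard]; omega
    · rw [habccard]
  have habcΓ : ({a,b,c}:Finset ℕ) ∈ Γ := (hmemΓ _).2 (Or.inr (Or.inr rfl))
  have hbcΓ : ({b,c}:Finset ℕ) ∈ Γ := (hmemΓ _).2 (Or.inr (Or.inl rfl))
  have hΔΓ : ∀ x ∈ Δ, x ∈ Γ := fun x h => (hmemΓ x).2 (Or.inl h)
  have hsupΓ : Γ.sup Finset.card = 3 :=
    le_antisymm (Finset.sup_le hΓ3) (habccard ▸ Finset.le_sup habcΓ)
  have hpureΓ : IsPure Γ := by
    intro F hF hmax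
    rw [hsupΓ]
    rcases (hmemΓ F).1 hF with h | rfl | rfl
    · have h6 : F.card = Δ.sup Finset.card := hpure F h (fun G hG hsub => hmax G (hΔΓ G hG) hsub)
      rw [h6, hsupΔ]
    · exfalso
      have heq := hmax {a,b,c} habcΓ (by
        intro t ht
        simp only [Finset.mem_insert, Finset.mem_singleton] at ht ⊢
        tauto)
      have h7 : a ∈ ({b,c}:Finset ℕ) := by rw [heq]; simp
      simp only [Finset.mem_insert, Finset.mem_singleton] at h7
      tauto
    · exact habccard
  have hfaces1 : facesOf Γ 1 = facesOf Δ 1 := by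
    ext G
    simp only [facesOf, Finset.mem_filter]
    constructor
    · rintro ⟨hG, hGc⟩
      rcases (hmemΓ G).1 hG with h | rfl | rfl
      · exact ⟨h, hGc⟩
      · rw [hbccard] at hGc; omega
      · rw [habccard] at hGc; omega
    · rintro ⟨hG, hGc⟩
      exact ⟨hΔΓ G hG, hGc⟩
  have hfaces2 : facesOf Γ 2 = insert {b,c} (facesOf Δ 2) := by
    ext G
    simp only [facesOf, Finset.mem_filter, Finset.mem_insert]
    constructor
    · rintro ⟨hG, hGc⟩
      rcases (hmemΓ G).1 hG with h | rfl | rfl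
      · exact Or.inr ⟨h, hGc⟩
      · exact Or.inl rfl
      · rw [habccard] at hGc; omega
    · rintro (rfl | ⟨hG, hGc⟩)
      · exact ⟨hbcΓ, hbccard⟩
      · exact ⟨hΔΓ G hG, hGc⟩
  have hfaces3 : facesOf Γ 3 = insert {a,b,c} (facesOf Δ 3) := by
    ext G
    simp only [facesOf, Finset.mem_filter, Finset.mem_insert]
    constructor
    · rintro ⟨hG, hGc⟩
      rcases (hmemΓ G).1 hG with h | rfl | rfl
      · exact Or.inr ⟨h, hGc⟩
      · rw [hbccard] at hGc; omega
      · exact Or.inl rfl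
    · rintro (rfl | ⟨hG, hGc⟩)
      · exact ⟨habcΓ, habccard⟩
      · exact ⟨hΔΓ G hG, hGc⟩
  have hf1 : fVec Γ 1 = fVec Δ 1 := by
    rw [fVec, fVec, if_neg one_ne_zero, if_neg one_ne_zero, hfaces1]
  have hf2 : fVec Γ 2 = fVec Δ 2 + 1 := by
    have hnm : ({b,c}:Finset ℕ) ∉ facesOf Δ 2 := fun h => hbcΔ (Finset.mem_filter.1 h).1
    rw [fVec, fVec, if_neg (by norm_num), if_neg (by norm_num), hfaces2,
      Finset.card_insert_of_notMem hnm]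
    push_cast
    ring
  have hf3 : fVec Γ 3 = fVec Δ 3 + 1 := by
    have hnm : ({a,b,c}:Finset ℕ) ∉ facesOf Δ 3 := fun h => habcΔ (Finset.mem_filter.1 h).1
    rw [fVec, fVec, if_neg (by norm_num), if_neg (by norm_num), hfaces3,
      Finset.card_insert_of_notMem hnm]
    push_cast
    ring
  have hfv0 : ∀ Λ : Finset (Finset ℕ), fVec Λ 0 = 1 := fun _ => if_pos rfl
  have hlink_mem : ∀ (Λ : Finset (Finset ℕ)) (v : ℕ) (G : Finset ℕ),
      G ∈ link Λ {v} ↔ G ∈ Λ ∧ v ∉ G ∧ G ∪ {v} ∈ Λ := by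
    intro Λ v G
    rw [link, Finset.mem_filter, Finset.disjoint_singleton_right]
  have hΓdc : ∀ F ∈ Γ, ∀ G ⊆ F, G ∈ Γ := by
    intro F hF G hG
    rw [hΓ, Finset.mem_union] at hF ⊢
    rcases hF with h | h
    · exact Or.inl (hdc F h G hG)
    · exact Or.inr (Finset.mem_powerset.2 (hG.trans (Finset.mem_powerset.1 h)))
  have hlinkdc : ∀ (Λ : Finset (Finset ℕ)), (∀ F ∈ Λ, ∀ G ⊆ F, G ∈ Λ) → ∀ (v:ℕ),
      ∀ F ∈ link Λ {v}, ∀ G ⊆ F, G ∈ link Λ {v} := by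
    intro Λ hΛ v F hF G hG
    rw [hlink_mem] at hF ⊢
    obtain ⟨h1, h2, h3⟩ := hF
    exact ⟨hΛ F h1 G hG, fun hv => h2 (hG hv),
      hΛ _ h3 _ (Finset.union_subset_union hG (Finset.Subset.refl _))⟩
  have hΔne : ∅ ∈ Δ := hdc _ habΔ ∅ (Finset.empty_subset _)
  have hlinksub : ∀ (v:ℕ) (G : Finset ℕ), G ∈ link Δ {v} → G ∈ link Γ {v} := by
    intro v G hG
    rw [hlink_mem] at hG ⊢
    exact ⟨hΔΓ _ hG.1, hG.2.1, hΔΓ _ hG.2.2⟩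
  have hdimlink : ∀ v : ℕ, ({v}:Finset ℕ) ∈ Δ → dimZ (link Δ {v}) = 1 := by
    intro v hv
    obtain ⟨M, hM, hMmax⟩ := Finset.exists_max_image (Δ.filter fun G => ({v}:Finset ℕ) ⊆ G)
      Finset.card ⟨{v}, Finset.mem_filter.2 ⟨hv, Finset.Subset.refl _⟩⟩
    obtain ⟨hMΔ, hvM⟩ := Finset.mem_filter.1 hM
    have hMmax' : ∀ G ∈ Δ, M ⊆ G → M = G := by
      intro G hG hsub
      exact Finset.eq_of_subset_of_card_le hsub
        (hMmax G (Finset.mem_filter.2 ⟨hG, hvM.trans hsub⟩))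
    have hM3 : M.card = 3 := by rw [hpure M hMΔ hMmax', hsupΔ]
    have hvM' : v ∈ M := Finset.singleton_subset_iff.1 hvM
    have hEl : M.erase v ∈ link Δ {v} := by
      rw [hlink_mem]
      refine ⟨hdc _ hMΔ _ (Finset.erase_subset _ _), Finset.notMem_erase _ _, ?_⟩
      have hME : M.erase v ∪ {v} = M := by
        ext t
        simp only [Finset.mem_union, Finset.mem_erase, Finset.mem_singleton]
        constructor
        · rintro (⟨_, h⟩ | rfl)
          · exact h
          · exact hvM'
        · intro ht
          by_cases h : t = v
          · exact Or.inr h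
          · exact Or.inl ⟨h, ht⟩
      rw [hME]
      exact hMΔ
    have hEc : (M.erase v).card = 2 := by
      rw [Finset.card_erase_of_mem hvM', hM3]
    have hle : ∀ G ∈ link Δ {v}, G.card ≤ 2 := by
      intro G hG
      rw [hlink_mem] at hG
      obtain ⟨h1, h2, h3⟩ := hG
      have h4 := hsupΔ ▸ Finset.le_sup (f := Finset.card) h3
      have h5 : (G ∪ {v}).card = G.card + 1 := by
        rw [Finset.card_union_of_disjoint (Finset.disjoint_singleton_right.2 h2),
          Finset.card_singleton]
      omega
    have hsl : (link Δ {v}).sup Finset.card = 2 :=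
      le_antisymm (Finset.sup_le hle) (hEc ▸ Finset.le_sup hEl)
    rw [dimZ, hsl]
    rfl
  have hedgeΔ : ∀ v : ℕ, ({v}:Finset ℕ) ∈ Δ → ∀ u : ℕ, ({u}:Finset ℕ) ∈ link Δ {v} →
      ∃ w, w ≠ u ∧ ({u,w}:Finset ℕ) ∈ link Δ {v} := by
    intro v hv u hu
    have hβ := hCM v hv {u} hu (-1) (by
      rw [hdimlink v hv, Finset.card_singleton]
      norm_num)
    have e0 : ((-1:ℤ)+1).toNat = 0 := rfl
    rw [betti_eq_homDim K (by norm_num), e0] at hβ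
    have h0l : ∅ ∈ link Δ {v} := by
      rw [hlink_mem]
      exact ⟨hΔne, Finset.notMem_empty v, by rw [Finset.empty_union]; exact hv⟩
    have h0' : ∅ ∈ link (link Δ {v}) {u} := by
      rw [hlink_mem]
      exact ⟨h0l, Finset.notMem_empty u, by rw [Finset.empty_union]; exact hu⟩
    obtain ⟨G, hG⟩ := vertex_exists K h0' hβ
    obtain ⟨hGl, hGc⟩ := Finset.mem_filter.1 hG
    obtain ⟨w, rfl⟩ := Finset.card_eq_one.1 hGc
    rw [hlink_mem] at hGl
    obtain ⟨h1, h2, h3⟩ := hGl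
    have hwu : w ≠ u := by
      intro h
      exact h2 (by simp [h])
    refine ⟨w, hwu, ?_⟩
    have huw : ({w}:Finset ℕ) ∪ {u} = {u, w} := by
      ext t
      simp only [Finset.mem_union, Finset.mem_insert, Finset.mem_singleton] <;> tauto
    rwa [huw] at h3
  have hβ0Δ : ∀ v : ℕ, ({v}:Finset ℕ) ∈ Δ →
      chains K (link Δ {v}) 1 ⊓ LinearMap.ker (bdry K) ≤
      (chains K (link Δ {v}) 2).map (bdry K) := by
    intro v hv
    apply Z_le_B K (hlinkdc Δ hdc v)
    have h0l : ∅ ∈ link Δ {v} := by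
      rw [hlink_mem]
      exact ⟨hΔne, Finset.notMem_empty v, by rw [Finset.empty_union]; exact hv⟩
    have hβ := hCM v hv ∅ h0l 0 (by
      rw [hdimlink v hv, Finset.card_empty]
      norm_num)
    have e1 : ((0:ℤ)+1).toNat = 1 := rfl
    rw [link_empty, betti_eq_homDim K (by norm_num), e1] at hβ
    exact hβ
  have hcardΓlink : ∀ v:ℕ, ∀ F ∈ link Γ {v}, F.card ≤ 2 := by
    intro v F hF
    rw [hlink_mem] at hF
    obtain ⟨h1, h2, h3⟩ := hF
    have h4 := hΓ3 _ h3
    have h5 : (F ∪ {v}).card = F.card + 1 := by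
      rw [Finset.card_union_of_disjoint (Finset.disjoint_singleton_right.2 h2),
        Finset.card_singleton]
    omega
  have hlinkA : ∀ G, G ∈ link Γ {a} ↔ G ∈ link Δ {a} ∨ G = {b,c} := by
    intro G
    constructor
    · intro hG
      rw [hlink_mem] at hG
      obtain ⟨hGΓ, haG, hU⟩ := hG
      rcases (hmemΓ _).1 hU with h | h | h
      · left
        rw [hlink_mem]
        exact ⟨hdc _ h _ Finset.subset_union_left, haG, h⟩
      · exfalso
        have h8 : a ∈ G ∪ {a} := Finset.mem_union_right _ (Finset.mem_singleton_self a)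
        rw [h] at h8
        simp only [Finset.mem_insert, Finset.mem_singleton] at h8
        tauto
      · right
        apply Finset.Subset.antisymm
        · intro t ht
          have h8 : t ∈ G ∪ {a} := Finset.mem_union_left _ ht
          rw [h] at h8
          simp only [Finset.mem_insert, Finset.mem_singleton] at h8 ⊢
          rcases h8 with rfl | h' | h'
          · exact absurd ht haG
          · exact Or.inl h'
          · exact Or.inr h'
        · intro t ht
          simp only [Finset.mem_insert, Finset.mem_singleton] at ht
          have hb' : b ∈ G := by
            have h8 : b ∈ G ∪ {a} := by rw [h]; simp
            rcases Finset.mem_union.1 h8 with h' | h'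
            · exact h'
            · simp only [Finset.mem_singleton] at h'
              exact absurd h'.symm hab
          have hc' : c ∈ G := by
            have h8 : c ∈ G ∪ {a} := by rw [h]; simp
            rcases Finset.mem_union.1 h8 with h' | h'
            · exact h'
            · simp only [Finset.mem_singleton] at h'
              exact absurd h'.symm hac
          rcases ht with rfl | rfl
          · exact hb'
          · exact hc'
    · rintro (hG | rfl)
      · exact hlinksub a G hG
      · rw [hlink_mem]
        refine ⟨hbcΓ, by simp [hab, hac], ?_⟩
        have h8 : ({b,c}:Finset ℕ) ∪ {a} = {a,b,c} := by
          ext t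
          simp only [Finset.mem_union, Finset.mem_insert, Finset.mem_singleton] <;> tauto
        rw [h8]
        exact habcΓ
  have hlinkB : ∀ G, G ∈ link Γ {b} ↔ G ∈ link Δ {b} ∨ G = {c} ∨ G = {a,c} := by
    intro G
    constructor
    · intro hG
      rw [hlink_mem] at hG
      obtain ⟨hGΓ, hbG, hU⟩ := hG
      rcases (hmemΓ _).1 hU with h | h | h
      · left
        rw [hlink_mem]
        exact ⟨hdc _ h _ Finset.subset_union_left, hbG, h⟩
      · right; left
        apply Finset.Subset.antisymm
        · intro t ht
          have h8 : t ∈ G ∪ {b} := Finset.mem_union_left _ ht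
          rw [h] at h8
          simp only [Finset.mem_insert, Finset.mem_singleton] at h8 ⊢
          rcases h8 with rfl | rfl
          · exact absurd ht hbG
          · rfl
        · intro t ht
          simp only [Finset.mem_singleton] at ht
          subst ht
          have h8 : t ∈ G ∪ {b} := by rw [h]; simp
          rcases Finset.mem_union.1 h8 with h' | h'
          · exact h'
          · simp only [Finset.mem_singleton] at h'
            exact absurd h'.symm hbc
      · right; right
        apply Finset.Subset.antisymm
        · intro t ht
          have h8 : t ∈ G ∪ {b} := Finset.mem_union_left _ ht
          rw [h] at h8
          simp only [Finset.mem_insert, Finset.mem_singleton] at h8 ⊢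
          rcases h8 with rfl | rfl | rfl
          · exact Or.inl rfl
          · exact absurd ht hbG
          · exact Or.inr rfl
        · intro t ht
          simp only [Finset.mem_insert, Finset.mem_singleton] at ht
          have ha' : a ∈ G := by
            have h8 : a ∈ G ∪ {b} := by rw [h]; simp
            rcases Finset.mem_union.1 h8 with h' | h'
            · exact h'
            · simp only [Finset.mem_singleton] at h'
              exact absurd h' hab
          have hc' : c ∈ G := by
            have h8 : c ∈ G ∪ {b} := by rw [h]; simp
            rcases Finset.mem_union.1 h8 with h' | h'
            · exact h'
            · simp only [Finset.mem_singleton] at h'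
              exact absurd h'.symm hbc
          rcases ht with rfl | rfl
          · exact ha'
          · exact hc'
    · rintro (hG | rfl | rfl)
      · exact hlinksub b G hG
      · rw [hlink_mem]
        refine ⟨hΔΓ _ hcΔ, by simp [hbc], ?_⟩
        have h8 : ({c}:Finset ℕ) ∪ {b} = {b,c} := by
          ext t
          simp only [Finset.mem_union, Finset.mem_insert, Finset.mem_singleton] <;> tauto
        rw [h8]
        exact hbcΓ
      · rw [hlink_mem]
        refine ⟨hΔΓ _ hacΔ, by simp [Ne.symm hab, hbc], ?_⟩
        have h8 : ({a,c}:Finset ℕ) ∪ {b} = {a,b,c} := by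
          ext t
          simp only [Finset.mem_union, Finset.mem_insert, Finset.mem_singleton] <;> tauto
        rw [h8]
        exact habcΓ
  have hlinkC : ∀ G, G ∈ link Γ {c} ↔ G ∈ link Δ {c} ∨ G = {b} ∨ G = {a,b} := by
    intro G
    constructor
    · intro hG
      rw [hlink_mem] at hG
      obtain ⟨hGΓ, hcG, hU⟩ := hG
      rcases (hmemΓ _).1 hU with h | h | h
      · left
        rw [hlink_mem]
        exact ⟨hdc _ h _ Finset.subset_union_left, hcG, h⟩
      · right; left
        apply Finset.Subset.antisymm
        · intro t ht
          have h8 : t ∈ G ∪ {c} := Finset.mem_union_left _ ht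
          rw [h] at h8
          simp only [Finset.mem_insert, Finset.mem_singleton] at h8 ⊢
          rcases h8 with rfl | rfl
          · rfl
          · exact absurd ht hcG
        · intro t ht
          simp only [Finset.mem_singleton] at ht
          subst ht
          have h8 : t ∈ G ∪ {c} := by rw [h]; simp
          rcases Finset.mem_union.1 h8 with h' | h'
          · exact h'
          · simp only [Finset.mem_singleton] at h'
            exact absurd h' hbc
      · right; right
        apply Finset.Subset.antisymm
        · intro t ht
          have h8 : t ∈ G ∪ {c} := Finset.mem_union_left _ ht
          rw [h] at h8
          simp only [Finset.mem_insert, Finset.mem_singleton] at h8 ⊢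
          rcases h8 with rfl | rfl | rfl
          · exact Or.inl rfl
          · exact Or.inr rfl
          · exact absurd ht hcG
        · intro t ht
          simp only [Finset.mem_insert, Finset.mem_singleton] at ht
          have ha' : a ∈ G := by
            have h8 : a ∈ G ∪ {c} := by rw [h]; simp
            rcases Finset.mem_union.1 h8 with h' | h'
            · exact h'
            · simp only [Finset.mem_singleton] at h'
              exact absurd h' hac
          have hb' : b ∈ G := by
            have h8 : b ∈ G ∪ {c} := by rw [h]; simp
            rcases Finset.mem_union.1 h8 with h' | h'
            · exact h'
            · simp only [Finset.mem_singleton] at h'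
              exact absurd h' hbc
          rcases ht with rfl | rfl
          · exact ha'
          · exact hb'
    · rintro (hG | rfl | rfl)
      · exact hlinksub c G hG
      · rw [hlink_mem]
        refine ⟨hΔΓ _ hbΔ, by simp [Ne.symm hbc], ?_⟩
        have h8 : ({b}:Finset ℕ) ∪ {c} = {b,c} := by
          ext t
          simp only [Finset.mem_union, Finset.mem_insert, Finset.mem_singleton] <;> tauto
        rw [h8]
        exact hbcΓ
      · rw [hlink_mem]
        refine ⟨hΔΓ _ habΔ, by simp [Ne.symm hac, Ne.symm hbc], ?_⟩
        have h8 : ({a,b}:Finset ℕ) ∪ {c} = {a,b,c} := by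
          ext t
          simp only [Finset.mem_union, Finset.mem_insert, Finset.mem_singleton] <;> tauto
        rw [h8]
        exact habcΓ
  have hbLA : ({b}:Finset ℕ) ∈ link Δ {a} := by
    rw [hlink_mem]
    refine ⟨hbΔ, by simp [hab], ?_⟩
    have h8 : ({b}:Finset ℕ) ∪ {a} = {a,b} := by
      ext t
      simp only [Finset.mem_union, Finset.mem_insert, Finset.mem_singleton] <;> tauto
    rw [h8]
    exact habΔ
  have haLB : ({a}:Finset ℕ) ∈ link Δ {b} := by
    rw [hlink_mem]
    refine ⟨haΔ, by simp [Ne.symm hab], ?_⟩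
    have h8 : ({a}:Finset ℕ) ∪ {b} = {a,b} := by
      ext t
      simp only [Finset.mem_union, Finset.mem_insert, Finset.mem_singleton] <;> tauto
    rw [h8]
    exact habΔ
  have haLC : ({a}:Finset ℕ) ∈ link Δ {c} := by
    rw [hlink_mem]
    refine ⟨haΔ, by simp [Ne.symm hac], ?_⟩
    have h8 : ({a}:Finset ℕ) ∪ {c} = {a,c} := by
      ext t
      simp only [Finset.mem_union, Finset.mem_insert, Finset.mem_singleton] <;> tauto
    rw [h8]
    exact hacΔ
  have hCMΓ : ∀ v : ℕ, ({v}:Finset ℕ) ∈ Γ → IsCohenMacaulay K (link Γ {v}) := by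
    intro v hv
    by_cases hva : v = a
    · subst hva
      refine graph_CM K _ (hlinkdc Γ hΓdc v) (hcardΓlink v) ?_ ?_ ?_
      · exact ⟨{b,c}, (hlinkA _).2 (Or.inr rfl), hbccard⟩
      · intro u hu
        rcases (hlinkA {u}).1 hu with h | h
        · obtain ⟨w, hw, hE⟩ := hedgeΔ v haΔ u h
          exact ⟨w, hw, hlinksub v _ hE⟩
        · exfalso
          have := congrArg Finset.card h
          rw [Finset.card_singleton, hbccard] at this
          omega
      · refine Z1_ext K (link Δ {v}) (link Γ {v}) b c hbc (hβ0Δ v haΔ) ?_ ?_ ?_ ?_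
        · intro G hG
          obtain ⟨hGl, hGc⟩ := Finset.mem_filter.1 hG
          rcases (hlinkA G).1 hGl with h | rfl
          · exact Finset.mem_insert.2 (Or.inr (Finset.mem_filter.2 ⟨h, hGc⟩))
          · rw [hbccard] at hGc
            omega
        · exact Finset.mem_filter.2 ⟨hbLA, Finset.card_singleton b⟩
        · intro G hG
          obtain ⟨hGl, hGc⟩ := Finset.mem_filter.1 hG
          exact Finset.mem_filter.2 ⟨hlinksub v _ hGl, hGc⟩
        · exact Finset.mem_filter.2 ⟨(hlinkA _).2 (Or.inr rfl), hbccard⟩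
    · by_cases hvb : v = b
      · subst hvb
        refine graph_CM K _ (hlinkdc Γ hΓdc v) (hcardΓlink v) ?_ ?_ ?_
        · exact ⟨{a,c}, (hlinkB _).2 (Or.inr (Or.inr rfl)), haccard⟩
        · intro u hu
          rcases (hlinkB {u}).1 hu with h | h | h
          · obtain ⟨w, hw, hE⟩ := hedgeΔ v hbΔ u h
            exact ⟨w, hw, hlinksub v _ hE⟩
          · have hu' : u = c := by
              have := Finset.mem_singleton.1 (h ▸ Finset.mem_singleton_self u)
              exact this
            subst hu'
            refine ⟨a, hac, ?_⟩
            have h8 : ({u,a}:Finset ℕ) = {a,u} := Finset.pair_comm u a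
            rw [h8]
            exact (hlinkB _).2 (Or.inr (Or.inr rfl))
          · exfalso
            have := congrArg Finset.card h
            rw [Finset.card_singleton, haccard] at this
            omega
        · refine Z1_ext K (link Δ {v}) (link Γ {v}) a c hac (hβ0Δ v hbΔ) ?_ ?_ ?_ ?_
          · intro G hG
            obtain ⟨hGl, hGc⟩ := Finset.mem_filter.1 hG
            rcases (hlinkB G).1 hGl with h | rfl | rfl
            · exact Finset.mem_insert.2 (Or.inr (Finset.mem_filter.2 ⟨h, hGc⟩))
            · exact Finset.mem_insert.2 (Or.inl rfl)
            · rw [haccard] at hGc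
              omega
          · exact Finset.mem_filter.2 ⟨haLB, Finset.card_singleton a⟩
          · intro G hG
            obtain ⟨hGl, hGc⟩ := Finset.mem_filter.1 hG
            exact Finset.mem_filter.2 ⟨hlinksub v _ hGl, hGc⟩
          · exact Finset.mem_filter.2 ⟨(hlinkB _).2 (Or.inr (Or.inr rfl)), haccard⟩
      · by_cases hvc : v = c
        · subst hvc
          refine graph_CM K _ (hlinkdc Γ hΓdc v) (hcardΓlink v) ?_ ?_ ?_
          · exact ⟨{a,b}, (hlinkC _).2 (Or.inr (Or.inr rfl)), habcard⟩
          · intro u hu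
            rcases (hlinkC {u}).1 hu with h | h | h
            · obtain ⟨w, hw, hE⟩ := hedgeΔ v hcΔ u h
              exact ⟨w, hw, hlinksub v _ hE⟩
            · have hu' : u = b := by
                have := Finset.mem_singleton.1 (h ▸ Finset.mem_singleton_self u)
                exact this
              subst hu'
              refine ⟨a, hab, ?_⟩
              have h8 : ({u,a}:Finset ℕ) = {a,u} := Finset.pair_comm u a
              rw [h8]
              exact (hlinkC _).2 (Or.inr (Or.inr rfl))
            · exfalso
              have := congrArg Finset.card h
              rw [Finset.card_singleton, habcard] at this
              omega
          · refine Z1_ext K (link Δ {v}) (link Γ {v}) a b hab (hβ0Δ v hcΔ) ?_ ?_ ?_ ?_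
            · intro G hG
              obtain ⟨hGl, hGc⟩ := Finset.mem_filter.1 hG
              rcases (hlinkC G).1 hGl with h | rfl | rfl
              · exact Finset.mem_insert.2 (Or.inr (Finset.mem_filter.2 ⟨h, hGc⟩))
              · exact Finset.mem_insert.2 (Or.inl rfl)
              · rw [habcard] at hGc
                omega
            · exact Finset.mem_filter.2 ⟨haLC, Finset.card_singleton a⟩
            · intro G hG
              obtain ⟨hGl, hGc⟩ := Finset.mem_filter.1 hG
              exact Finset.mem_filter.2 ⟨hlinksub v _ hGl, hGc⟩
            · exact Finset.mem_filter.2 ⟨(hlinkC _).2 (Or.inr (Or.inr rfl)), habcard⟩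
        · have hvΔ : ({v}:Finset ℕ) ∈ Δ := by
            rcases (hmemΓ _).1 hv with h | h | h
            · exact h
            · exfalso
              have := congrArg Finset.card h
              rw [Finset.card_singleton, hbccard] at this
              omega
            · exfalso
              have := congrArg Finset.card h
              rw [Finset.card_singleton, habccard] at this
              omega
          have hlink_eq : link Γ {v} = link Δ {v} := by
            ext G
            rw [hlink_mem, hlink_mem]
            constructor
            · rintro ⟨hGΓ, hvG, hU⟩
              rcases (hmemΓ _).1 hU with h | h | h
              · exact ⟨hdc _ h _ Finset.subset_union_left, hvG, h⟩
              · exfalso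
                have h8 : v ∈ G ∪ {v} := Finset.mem_union_right _ (Finset.mem_singleton_self v)
                rw [h] at h8
                simp only [Finset.mem_insert, Finset.mem_singleton] at h8
                tauto
              · exfalso
                have h8 : v ∈ G ∪ {v} := Finset.mem_union_right _ (Finset.mem_singleton_self v)
                rw [h] at h8
                simp only [Finset.mem_insert, Finset.mem_singleton] at h8
                tauto
            · rintro ⟨h1, h2, h3⟩
              exact ⟨hΔΓ _ h1, h2, hΔΓ _ h3⟩
          rw [hlink_eq]
          exact hCM v hvΔ

  refine ⟨⟨hpureΓ, hCMΓ⟩, ?_, ?_, ?_, ?_⟩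
  · simp only [hVec, Finset.sum_range_succ, Finset.sum_range_zero, hfv0]
  · simp only [hVec, Finset.sum_range_succ, Finset.sum_range_zero, hfv0, hf1]
  · simp only [hVec, Finset.sum_range_succ, Finset.sum_range_zero, hfv0, hf1, hf2]
    norm_num [Nat.choose]
    ring
  · simp only [hVec, Finset.sum_range_succ, Finset.sum_range_zero, hfv0, hf1, hf2, hf3]
    norm_num [Nat.choose]
    ring
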